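/- Over the field F₂, if g̃ ∈ GA(Ṽ) has no fixed point and (a + fix_lin(g̃)) ∪ (g̃(a) + fix_lin(g̃)) = Ṽ for every point a, then either g̃ is a translation or fix_lin(g̃) is a hyperplane in V and g̃ is a glide reflection (a reflection composed with a translation). -/
import Mathlib

open Module Pointwise

/-- The moved space of an affine transformation. -/
def mov {F V P : Type*} [Field F] [AddCommGroup V] [Module F V] [AddTorsor V P]
    (g : P ≃ᵃ[F] P) : Set V :=
  Set.range fun x => g x -ᵥ x

/-- A reflection in the general affine group: an invertible affine transformation
whose fixed-point set is an affine hyperplane. -/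
def IsAffRefl {F V P : Type*} [Field F] [AddCommGroup V] [Module F V] [AddTorsor V P]
    (r : P ≃ᵃ[F] P) : Prop :=
  ∃ H : AffineSubspace F P, (H : Set P) = {x | r x = x} ∧
    Module.finrank F (V ⧸ H.direction) = 1

/-- Reflection length in the general affine group (`⊤` if no factorization exists). -/
noncomputable def reflLenA {F V P : Type*} [Field F] [AddCommGroup V] [Module F V]
    [AddTorsor V P] (g : P ≃ᵃ[F] P) : ℕ∞ :=
  sInf {n : ℕ∞ | ∃ l : List (P ≃ᵃ[F] P),
    (∀ r ∈ l, IsAffRefl r) ∧ l.prod = g ∧ (l.length : ℕ∞) = n}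

/-- The dimension of the moved space (an affine subspace of `V`). -/
noncomputable def movDim {F V P : Type*} [Field F] [AddCommGroup V] [Module F V]
    [AddTorsor V P] (g : P ≃ᵃ[F] P) : ℕ :=
  Module.finrank F (vectorSpan F (mov g))

theorem stmt19 {V P : Type*} [AddCommGroup V] [Module (ZMod 2) V]
    [FiniteDimensional (ZMod 2) V] [AddTorsor V P]
    (g : P ≃ᵃ[ZMod 2] P)
    (hfix : ∀ a : P, g a ≠ a)
    (hcov : ∀ a : P,
      ((· +ᵥ a) '' (LinearMap.ker ((g.linear : V →ₗ[ZMod 2] V) - 1) : Set V)) ∪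
        ((· +ᵥ g a) '' (LinearMap.ker ((g.linear : V →ₗ[ZMod 2] V) - 1) : Set V)) =
          Set.univ) :
    (∃ w : V, g = AffineEquiv.constVAdd (ZMod 2) P w) ∨
      (Module.finrank (ZMod 2)
          (V ⧸ LinearMap.ker ((g.linear : V →ₗ[ZMod 2] V) - 1)) = 1 ∧
        ∃ (r : P ≃ᵃ[ZMod 2] P) (w : V), IsAffRefl r ∧
          g = AffineEquiv.constVAdd (ZMod 2) P w * r) := by
  set K := LinearMap.ker ((g.linear : V →ₗ[ZMod 2] V) - 1) with hKdef
  have hKmem : ∀ v : V, v ∈ K ↔ (g.linear : V →ₗ[ZMod 2] V) v = v := by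
    intro v
    simp [hKdef, LinearMap.mem_ker, LinearMap.sub_apply, sub_eq_zero]
  obtain ⟨a⟩ : Nonempty P := inferInstance
  have hlin : ∀ x y : P, (g.linear : V →ₗ[ZMod 2] V) (x -ᵥ y) = g x -ᵥ g y := by
    intro x y
    simpa using g.toAffineMap.linearMap_vsub x y
  set c : V := g a -ᵥ a with hcdef
  have hgx : ∀ x : P, g x -ᵥ x = (g.linear : V →ₗ[ZMod 2] V) (x -ᵥ a) + (c - (x -ᵥ a)) := by
    intro x
    rw [hlin x a, hcdef, vsub_sub_vsub_cancel_right]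
    exact (vsub_add_vsub_cancel _ _ _).symm
  by_cases htop : ∀ v : V, v ∈ K
  · left
    refine ⟨c, ?_⟩
    ext x
    have h1 : (g.linear : V →ₗ[ZMod 2] V) (x -ᵥ a) = x -ᵥ a := (hKmem _).mp (htop _)
    have h2 : g x -ᵥ x = c := by rw [hgx x, h1]; abel
    simp only [AffineEquiv.constVAdd_apply]
    rw [← h2, vsub_vadd]
  · push_neg at htop
    obtain ⟨v₀, hv₀⟩ := htop
    have key : ∀ v : V, v ∈ K ∨ v - c ∈ K := by
      intro v
      have hmem : (v +ᵥ a) ∈ (((· +ᵥ a) '' (K : Set V)) ∪ ((· +ᵥ g a) '' (K : Set V))) := by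
        rw [hcov a]; trivial
      rcases hmem with ⟨k, hk, hke⟩ | ⟨k, hk, hke⟩
      · left
        have : k = v := vadd_right_cancel a hke
        rwa [← this]
      · right
        have : k = v - c := by
          have h1 : k +ᵥ g a = v +ᵥ a := hke
          have h2 : k = (v +ᵥ a) -ᵥ g a := by rw [← h1, vadd_vsub]
          rw [h2, vadd_vsub_assoc, hcdef, ← neg_vsub_eq_vsub_rev, sub_eq_add_neg]
        rwa [← this]
    have hc : c ∉ K := by
      intro hcK
      rcases key v₀ with h | h
      · exact hv₀ h
      · exact hv₀ (by simpa using K.add_mem h hcK)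
    have hrank : Module.finrank (ZMod 2) (V ⧸ K) = 1 := by
      apply finrank_eq_one (K.mkQ c)
      · simpa [Submodule.mkQ_apply, Submodule.Quotient.mk_eq_zero] using hc
      · intro w
        obtain ⟨v, rfl⟩ := K.mkQ_surjective w
        rcases key v with h | h
        · exact ⟨0, by rw [zero_smul, eq_comm, Submodule.mkQ_apply, Submodule.Quotient.mk_eq_zero]; exact h⟩
        · refine ⟨1, ?_⟩
          simp only [one_smul, Submodule.mkQ_apply]
          rw [Submodule.Quotient.eq]
          simpa using K.neg_mem h
    right
    refine ⟨hrank, (AffineEquiv.constVAdd (ZMod 2) P c)⁻¹ * g, c, ?_, (mul_inv_cancel_left _ _).symm⟩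
    set r : P ≃ᵃ[ZMod 2] P := (AffineEquiv.constVAdd (ZMod 2) P c)⁻¹ * g with hrdef
    have hg' : g = AffineEquiv.constVAdd (ZMod 2) P c * r := (mul_inv_cancel_left _ _).symm
    have hrx : ∀ x : P, g x = c +ᵥ r x := by
      intro x
      conv_lhs => rw [hg']
      rfl
    have hfixed : ∀ x : P, r x = x ↔ x -ᵥ a ∈ K := by
      intro x
      constructor
      · intro h
        have h2 : g x = c +ᵥ x := by rw [hrx x, h]
        have h3 : g x -ᵥ x = c := by rw [h2, vadd_vsub]
        rw [hgx x] at h3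
        rw [hKmem]
        have h4 := eq_sub_of_add_eq h3
        rwa [sub_sub_cancel] at h4
      · intro h
        have h1 : (g.linear : V →ₗ[ZMod 2] V) (x -ᵥ a) = x -ᵥ a := (hKmem _).mp h
        have h3 : g x -ᵥ x = c := by rw [hgx x, h1]; abel
        have h2 : g x = c +ᵥ x := by rw [← h3, vsub_vadd]
        have := hrx x
        rw [h2] at this
        exact (vadd_left_cancel c this.symm)
    refine ⟨AffineSubspace.mk' a K, ?_, ?_⟩
    · ext x
      rw [Set.mem_setOf_eq, hfixed x, AffineSubspace.mem_coe]
      exact AffineSubspace.mem_mk'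
    · rw [AffineSubspace.direction_mk']
      exact hrank
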